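/- Let A_i ∈ ℝ^{m×n_i} for i = 1,…,N, ρ > 0, 0 < β < 2, and symmetric matrices P_i. If there exist ε_i > 0 with ∑_{i=1}^N ε_i ≤ 2 - β and P_i ⪰ ρ(1/ε_i - 1)A_iᵀA_i for all i, then the block matrix Q with diagonal blocks P_i + ρ A_iᵀA_i (for i = 1,…,N), lower-right block ((2-β)/(ρβ²))I_m, and off-diagonal coupling blocks (1/β)A_iᵀ (and transposes), is positive semidefinite. -/

import Mathlib

open Matrix BigOperators

private lemma aux_quad {m : ℕ} (c β : ℝ) (hc : 0 < c) (hβ : 0 < β)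
    (y l : Fin m → ℝ) :
    0 ≤ c * (y ⬝ᵥ y) + (1 / (c * β ^ 2)) * (l ⬝ᵥ l) + (2 / β) * (l ⬝ᵥ y) := by
  set a := Real.sqrt c with ha
  have hs : a ^ 2 = c := Real.sq_sqrt hc.le
  have hapos : 0 < a := Real.sqrt_pos.2 hc
  set b := 1 / (β * a) with hb
  have hab : a * b = 1 / β := by
    rw [hb]; field_simp
  have hb2 : b ^ 2 = 1 / (c * β ^ 2) := by
    have hba : (β * a) ^ 2 = c * β ^ 2 := by rw [mul_pow, hs]; ring
    rw [hb, div_pow, one_pow, hba]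
  have key : c * (y ⬝ᵥ y) + (1 / (c * β ^ 2)) * (l ⬝ᵥ l) + (2 / β) * (l ⬝ᵥ y)
      = ∑ j, (a * y j + b * l j) ^ 2 := by
    simp only [dotProduct, Finset.mul_sum, ← Finset.sum_add_distrib]
    refine Finset.sum_congr rfl fun j _ => ?_
    have hinv : a⁻¹ ^ 2 = c⁻¹ := by rw [inv_pow, hs]
    linear_combination (y j * y j) * hs.symm + (l j * l j) * hb2
      + (2 * (l j * y j)) * hab.symm - 2 * β⁻¹ ^ 2 * l j ^ 2 * hinv
  rw [key]
  exact Finset.sum_nonneg fun j _ => sq_nonneg _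

theorem Q_posSemidef_quadratic_form
    (N m : ℕ) (n : Fin N → ℕ)
    (A : ∀ i : Fin N, Matrix (Fin m) (Fin (n i)) ℝ)
    (P : ∀ i : Fin N, Matrix (Fin (n i)) (Fin (n i)) ℝ)
    (ρ β : ℝ) (hρ : 0 < ρ) (hβ0 : 0 < β) (hβ2 : β < 2)
    (hPsymm : ∀ i, (P i).IsSymm)
    (ε : Fin N → ℝ) (hε : ∀ i, 0 < ε i)
    (hεsum : ∑ i, ε i ≤ 2 - β)
    (hP : ∀ i, (P i - (ρ * (1 / ε i - 1)) • ((A i)ᵀ * A i)).PosSemidef) :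
    ∀ (x : ∀ i : Fin N, Fin (n i) → ℝ) (lam : Fin m → ℝ),
      0 ≤ ∑ i, (x i) ⬝ᵥ ((P i + ρ • ((A i)ᵀ * A i)) *ᵥ (x i))
        + ((2 - β) / (β ^ 2 * ρ)) * (lam ⬝ᵥ lam)
        + (2 / β) * (lam ⬝ᵥ ∑ i, (A i) *ᵥ (x i)) := by
  intro x lam
  have hL : 0 ≤ lam ⬝ᵥ lam := by
    exact Finset.sum_nonneg fun j _ => mul_self_nonneg _
  -- per-block inequality
  have hkey : ∀ i : Fin N,
      0 ≤ (x i) ⬝ᵥ ((P i + ρ • ((A i)ᵀ * A i)) *ᵥ (x i))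
        + (ε i / (ρ * β ^ 2)) * (lam ⬝ᵥ lam)
        + (2 / β) * (lam ⬝ᵥ ((A i) *ᵥ (x i))) := by
    intro i
    set y := (A i) *ᵥ (x i) with hy
    have hAtA : (x i) ⬝ᵥ (((A i)ᵀ * A i) *ᵥ (x i)) = y ⬝ᵥ y := by
      rw [← mulVec_mulVec, dotProduct_mulVec, vecMul_transpose, hy]
    have hPx := (hP i).dotProduct_mulVec_nonneg (x i)
    simp only [star_trivial, sub_mulVec, smul_mulVec, dotProduct_sub,
      dotProduct_smul, smul_eq_mul, hAtA, sub_nonneg] at hPx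
    have hexp : (x i) ⬝ᵥ ((P i + ρ • ((A i)ᵀ * A i)) *ᵥ (x i))
        = (x i) ⬝ᵥ ((P i) *ᵥ (x i)) + ρ * (y ⬝ᵥ y) := by
      rw [add_mulVec, smul_mulVec, dotProduct_add, dotProduct_smul,
        smul_eq_mul, hAtA]
    have haux := aux_quad (ρ / ε i) β (div_pos hρ (hε i)) hβ0 y lam
    have hεne : ε i ≠ 0 := (hε i).ne'
    have h1 : ρ * (1 / ε i - 1) + ρ = ρ / ε i := by
      field_simp; ring
    have h2 : 1 / (ρ / ε i * β ^ 2) = ε i / (ρ * β ^ 2) := by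
      field_simp
    rw [h2] at haux
    have h3 : ρ / ε i * (y ⬝ᵥ y)
        = ρ * (1 / ε i - 1) * (y ⬝ᵥ y) + ρ * (y ⬝ᵥ y) := by
      rw [← h1]; ring
    rw [hexp]
    linarith [hPx, haux, h3]
  have hsum := Finset.sum_nonneg (fun i (_ : i ∈ Finset.univ) => hkey i)
  rw [Finset.sum_add_distrib, Finset.sum_add_distrib, ← Finset.sum_mul,
    ← Finset.mul_sum, ← Finset.sum_div] at hsum
  have hεL : (∑ i, ε i) / (ρ * β ^ 2) * (lam ⬝ᵥ lam)
      ≤ ((2 - β) / (β ^ 2 * ρ)) * (lam ⬝ᵥ lam) := by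
    apply mul_le_mul_of_nonneg_right _ hL
    have h : (2 - β) / (β ^ 2 * ρ) = (2 - β) / (ρ * β ^ 2) := by ring_nf
    rw [h]
    gcongr
  have hds : lam ⬝ᵥ ∑ i, (A i) *ᵥ (x i) = ∑ i, lam ⬝ᵥ ((A i) *ᵥ (x i)) := by
    simp only [dotProduct, Finset.sum_apply, Finset.mul_sum]
    exact Finset.sum_comm
  rw [hds, Finset.mul_sum]
  rw [Finset.mul_sum] at hsum
  linarith [hsum, hεL]
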